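/- Let V be an n-dimensional vector space over the field F_2 of 2 elements with n ≥ 3 and fixed basis {b_1,...,b_n}. Let L_D be a locating-dominating set of Γ(V) with |L_D ∩ T_1| = n−1. Then |L_D ∩ (T_n ∪ T_{n−1})| ≥ 1. -/

import Mathlib

/-- A set `L` is a locating-dominating set of `G` if for every two distinct
vertices `u, v ∉ L` we have `∅ ≠ N(u) ∩ L ≠ N(v) ∩ L ≠ ∅`. -/
def IsLocDom {α : Type*} (G : SimpleGraph α) (L : Set α) : Prop :=
  ∀ ⦃u v : α⦄, u ∉ L → v ∉ L → u ≠ v →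
    G.neighborSet u ∩ L ≠ ∅ ∧
    G.neighborSet u ∩ L ≠ G.neighborSet v ∩ L ∧
    G.neighborSet v ∩ L ≠ ∅

/-- A set `C` is an identifying code of `G` if `N[u] ∩ C ≠ N[v] ∩ C`
for all distinct vertices `u, v`. -/
def IsIdCode {α : Type*} (G : SimpleGraph α) (C : Set α) : Prop :=
  ∀ ⦃u v : α⦄, u ≠ v →
    insert u (G.neighborSet u) ∩ C ≠ insert v (G.neighborSet v) ∩ C

/-- The location-domination number: minimum cardinality of a locating-dominating set. -/
noncomputable def locDomNum {α : Type*} (G : SimpleGraph α) : ℕ :=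
  sInf {k : ℕ | ∃ L : Set α, IsLocDom G L ∧ L.ncard = k}

/-- The identifying number: minimum cardinality of an identifying code. -/
noncomputable def idNum {α : Type*} (G : SimpleGraph α) : ℕ :=
  sInf {k : ℕ | ∃ C : Set α, IsIdCode G C ∧ C.ncard = k}
/-- The non-zero component graph of a vector space `W` with respect to a fixed
basis `b`: vertices are the non-zero vectors, and two distinct vertices are
adjacent iff some basis vector has non-zero coefficient in both of their
representations. -/
def nzcGraph {F W : Type*} [Field F] [AddCommGroup W] [Module F W] {n : ℕ}
    (b : Module.Basis (Fin n) F W) : SimpleGraph {w : W // w ≠ 0} where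
  Adj u v := u ≠ v ∧ ∃ i, b.repr u.1 i ≠ 0 ∧ b.repr v.1 i ≠ 0
  symm := ⟨by
    rintro u v ⟨h, i, hu, hv⟩
    exact ⟨h.symm, i, hv, hu⟩⟩
  loopless := ⟨by
    rintro u ⟨h, -⟩
    exact h rfl⟩

/-- `Tset b i` is the class `Tᵢ` of non-zero vectors having exactly `i`
non-zero coefficients in their representation w.r.t. the basis `b`. -/
def Tset {F W : Type*} [Field F] [AddCommGroup W] [Module F W] {n : ℕ}
    (b : Module.Basis (Fin n) F W) (i : ℕ) : Set {w : W // w ≠ 0} :=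
  {v | (b.repr v.1).support.card = i}

/-- For `n ≥ 3` over `F₂`: if `L_D` is a locating-dominating set of `Γ(V)` with
`|L_D ∩ T₁| = n - 1`, then `|L_D ∩ (T_n ∪ T_{n-1})| ≥ 1`. -/
theorem stmt_7 {F W : Type*} [Field F] [Fintype F] (hq : Fintype.card F = 2)
    [AddCommGroup W] [Module F W] {n : ℕ} (hn : 3 ≤ n) (b : Module.Basis (Fin n) F W)
    (L : Set {w : W // w ≠ 0}) (hL : IsLocDom (nzcGraph b) L)
    (hs : (L ∩ Tset b 1).ncard = n - 1) :
    1 ≤ (L ∩ (Tset b n ∪ Tset b (n - 1))).ncard := by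
  classical
  haveI : Finite W := Finite.of_equiv _ b.repr.toEquiv.symm
  -- every nonzero element of F is 1
  have hF : ∀ x : F, x ≠ 0 → x = 1 := by
    intro x hx
    have h1 : Fintype.card Fˣ = 1 := by
      rw [Fintype.card_units, hq]
    haveI : Subsingleton Fˣ := Fintype.card_le_one_iff_subsingleton.mp h1.le
    have : Units.mk0 x hx = 1 := Subsingleton.elim _ _
    simpa using congrArg Units.val this
  -- basis vectors as vertices
  set e : Fin n → {w : W // w ≠ 0} := fun i => ⟨b i, b.ne_zero i⟩ with he
  have heT1 : ∀ i, e i ∈ Tset b 1 := by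
    intro i
    simp [Tset, he, Module.Basis.repr_self, Finsupp.support_single_ne_zero]
  -- there is a basis vector not in L
  have hj : ∃ j, e j ∉ L := by
    by_contra h
    push_neg at h
    have hsub : Set.range e ⊆ L ∩ Tset b 1 := by
      rintro _ ⟨i, rfl⟩
      exact ⟨h i, heT1 i⟩
    have hinj : Function.Injective e := by
      intro i k hik
      exact b.injective (congrArg Subtype.val hik)
    have hcard : (Set.range e).ncard = n := by
      rw [← Nat.card_coe_set_eq, Nat.card_range_of_injective hinj, Nat.card_eq_fintype_card,
        Fintype.card_fin]
    have := Set.ncard_le_ncard hsub (Set.toFinite _)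
    rw [hcard, hs] at this
    omega
  obtain ⟨j, hjL⟩ := hj
  -- the two special vectors
  set uW : W := ∑ i, b i with huW
  set vW : W := ∑ i ∈ Finset.univ.erase j, b i with hvW
  have hru : ∀ k, b.repr uW k = 1 := by
    intro k
    simp [huW, map_sum, Finsupp.finset_sum_apply, Module.Basis.repr_self, Finsupp.single_apply]
  have hrv : ∀ k, b.repr vW k = if k = j then 0 else 1 := by
    intro k
    rw [hvW, map_sum, Finsupp.finset_sum_apply]
    simp only [Module.Basis.repr_self, Finsupp.single_apply]
    by_cases hk : k = j
    · subst hk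
      rw [if_pos rfl]
      apply Finset.sum_eq_zero
      intro i hi
      exact if_neg (Finset.mem_erase.mp hi).1
    · rw [if_neg hk, Finset.sum_ite_eq' (Finset.univ.erase j) k (fun _ => (1:F)),
        if_pos (Finset.mem_erase.mpr ⟨hk, Finset.mem_univ k⟩)]
  have hu0 : uW ≠ 0 := by
    intro h
    have := hru j
    rw [h] at this
    simp at this
  -- a coordinate different from j
  obtain ⟨k, hkj⟩ : ∃ k : Fin n, k ≠ j := by
    by_cases h0 : j = ⟨0, by omega⟩
    · exact ⟨⟨1, by omega⟩, by simp [h0, Fin.ext_iff]⟩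
    · exact ⟨⟨0, by omega⟩, fun h => h0 h.symm⟩
  have hv0 : vW ≠ 0 := by
    intro h
    have := hrv k
    rw [h] at this
    simp [hkj] at this
  set u : {w : W // w ≠ 0} := ⟨uW, hu0⟩ with hu
  set v : {w : W // w ≠ 0} := ⟨vW, hv0⟩ with hv
  have huTn : u ∈ Tset b n := by
    have : (b.repr uW).support = Finset.univ := by
      ext i
      simp [Finsupp.mem_support_iff, hru]
    simp [Tset, hu, this]
  have hvTn1 : v ∈ Tset b (n - 1) := by
    have hsupp : (b.repr vW).support = Finset.univ.erase j := by
      ext i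
      simp only [Finsupp.mem_support_iff, hrv, Finset.mem_erase, Finset.mem_univ, and_true]
      by_cases hi : i = j <;> simp [hi]
    simp [Tset, hv, hsupp, Finset.card_erase_of_mem]
  -- goal reduces to nonemptiness
  rw [show (1:ℕ) ≤ (L ∩ (Tset b n ∪ Tset b (n - 1))).ncard ↔
      0 < (L ∩ (Tset b n ∪ Tset b (n - 1))).ncard from Iff.rfl, Set.ncard_pos]
  by_contra hcon
  rw [Set.not_nonempty_iff_eq_empty] at hcon
  have hnot : ∀ w : {w : W // w ≠ 0}, w ∈ L → w ∉ Tset b n ∧ w ∉ Tset b (n - 1) := by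
    intro w hw
    constructor <;> intro hT
    · exact absurd (Set.mem_inter hw (Or.inl hT)) (hcon ▸ Set.notMem_empty w)
    · exact absurd (Set.mem_inter hw (Or.inr hT)) (hcon ▸ Set.notMem_empty w)
  have huL : u ∉ L := fun h => (hnot u h).1 huTn
  have hvL : v ∉ L := fun h => (hnot v h).2 hvTn1
  have huv : u ≠ v := by
    intro h
    have : b.repr uW j = b.repr vW j := by rw [show uW = vW from congrArg Subtype.val h]
    rw [hru, hrv, if_pos rfl] at this
    exact one_ne_zero this
  -- every element of L is adjacent to both u and v
  have hadj : ∀ w : {w : W // w ≠ 0}, w ∈ L →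
      (nzcGraph b).Adj u w ∧ (nzcGraph b).Adj v w := by
    intro w hw
    have hwne : b.repr w.1 ≠ 0 := fun h => w.2 (b.repr.map_eq_zero_iff.mp h)
    constructor
    · refine ⟨fun h => huL (h ▸ hw), ?_⟩
      obtain ⟨i, hi⟩ := Finsupp.ne_iff.mp hwne
      rw [Finsupp.zero_apply] at hi
      exact ⟨i, by rw [hru]; exact one_ne_zero, hi⟩
    · refine ⟨fun h => hvL (h ▸ hw), ?_⟩
      by_contra hno
      push_neg at hno
      have hwj : ∀ i, i ≠ j → b.repr w.1 i = 0 := fun i hi =>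
        hno i (by rw [hrv, if_neg hi]; exact one_ne_zero)
      have hjne : b.repr w.1 j ≠ 0 := by
        intro h0
        apply hwne
        ext i
        rw [Finsupp.zero_apply]
        by_cases hi : i = j
        · rw [hi]; exact h0
        · exact hwj i hi
      have hwbj : w.1 = b j := by
        apply b.repr.injective
        rw [Module.Basis.repr_self]
        ext i
        rw [Finsupp.single_apply]
        by_cases hi : i = j
        · rw [hi, if_pos rfl]; exact hF _ hjne
        · rw [if_neg (fun h => hi h.symm)]; exact hwj i hi
      have hwe : w = e j := Subtype.ext hwbj
      exact hjL (hwe ▸ hw)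
  have hNeq : (nzcGraph b).neighborSet u ∩ L = (nzcGraph b).neighborSet v ∩ L := by
    ext w
    simp only [Set.mem_inter_iff, SimpleGraph.mem_neighborSet]
    exact ⟨fun ⟨_, hw⟩ => ⟨(hadj w hw).2, hw⟩, fun ⟨_, hw⟩ => ⟨(hadj w hw).1, hw⟩⟩
  obtain ⟨-, h2, -⟩ := hL huL hvL huv
  exact h2 hNeq
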